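/- For all integers n, m ≥ 0, every integer k with 0 ≤ k ≤ n+m, and all nonzero real numbers a₁, a₂, the linearization coefficient is given by β_k^{(n,m)}(a₁,a₂) = (a₁^{k−m} a₂^{m} (1/2)_k)/(4^{m+n−k} (m+n−k)! (1/2)_n (1/2)_m) · Σ_{i=0}^{m+n−k} a₁^{i} · C(m+n−k, i) · (−m+k+i+1)_{2(m+n−k−i)} · a₂^{−i} · Σ_{ℓ=0}^{i} ((k+2)_ℓ (−k−1)_ℓ (−i)_ℓ)/((−m−i)_ℓ ℓ!) · (m−i+1+ℓ)_{2i−ℓ} · a₂^{ℓ}, where C(p, q) denotes the binomial coefficient. (The inner sum is the terminating hypergeometric series (m−i+1)_{2i} · ₃F₂(k+2, −k−1, −i; −m−i, m−i+1; a₂), written in regularized form using (m−i+1)_{2i}/(m−i+1)_ℓ = (m−i+1+ℓ)_{2i−ℓ}.) -/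

import Mathlib

open Finset

/-- The Bessel polynomial `q_n(u) = ∑_{k=0}^n (n!(2n−k)! 2^k)/((2n)!(n−k)! k!) u^k`. -/
noncomputable def besselQ (n : ℕ) (u : ℝ) : ℝ :=
  ∑ k ∈ Finset.range (n + 1),
    ((n.factorial : ℝ) * (2 * n - k).factorial * 2 ^ k) /
      ((2 * n).factorial * (n - k).factorial * k.factorial) * u ^ k

/-- The Pochhammer symbol `(z)_k = z(z+1)⋯(z+k−1)` for a real `z`. -/
def poch (z : ℝ) (k : ℕ) : ℝ := ∏ i ∈ Finset.range k, (z + (i : ℝ))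

/-- coefficient of `u^k` in `besselQ n`. -/
noncomputable def cC (n k : ℕ) : ℝ :=
  ((n.factorial : ℝ) * (2 * n - k).factorial * 2 ^ k) /
      ((2 * n).factorial * (n - k).factorial * k.factorial)

lemma besselQ_eq (n : ℕ) (u : ℝ) :
    besselQ n u = ∑ k ∈ Finset.range (n + 1), cC n k * u ^ k := rfl

/-- inversion coefficients: `u^j = ∑ dd j k * besselQ k u`. -/
noncomputable def dd (j k : ℕ) : ℝ :=
  if k ≤ j ∧ j ≤ 2 * k + 1 then
    (-1) ^ (j - k) * ((j + 1).factorial * (2 * k).factorial) /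
      ((j - k).factorial * (2 * k + 1 - j).factorial * 2 ^ (j - k) * 2 ^ k * k.factorial)
  else 0

lemma poch_succ (z : ℝ) (k : ℕ) : poch z (k + 1) = poch z k * (z + k) :=
  Finset.prod_range_succ _ _

@[simp] lemma poch_zero (z : ℝ) : poch z 0 = 1 := rfl

lemma poch_nat (a : ℕ) (b : ℕ) :
    poch ((a : ℝ) + 1) b = ((a + b).factorial : ℝ) / (a.factorial : ℝ) := by
  induction b with
  | zero =>
      simp only [Nat.add_zero, poch_zero]
      rw [div_self]
      exact_mod_cast a.factorial_ne_zero
  | succ b ih =>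
      rw [poch_succ, ih]
      have e1 : (a + (b + 1)).factorial = (a + b + 1) * (a + b).factorial := by
        rw [show a + (b+1) = (a+b)+1 by omega, Nat.factorial_succ]
      rw [e1]
      have h1 : (a.factorial : ℝ) ≠ 0 := by exact_mod_cast a.factorial_ne_zero
      push_cast
      field_simp
      ring

lemma poch_neg_nat' (b l : ℕ) :
    poch (-((b + l : ℕ) : ℝ)) l = (-1) ^ l * (((b + l).factorial : ℝ)) / (b.factorial : ℝ) := by
  induction l generalizing b with
  | zero =>
      simp only [Nat.add_zero, poch_zero, pow_zero, one_mul]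
      rw [div_self]
      exact_mod_cast b.factorial_ne_zero
  | succ l ih =>
      rw [show b + (l+1) = (b+1)+l by omega, poch_succ, ih (b+1)]
      have e2 : (b+1).factorial = (b+1) * b.factorial := Nat.factorial_succ b
      rw [e2]
      have h1 : (b.factorial : ℝ) ≠ 0 := by exact_mod_cast b.factorial_ne_zero
      have h2 : ((b:ℝ) + 1) ≠ 0 := by positivity
      push_cast
      field_simp
      ring

lemma poch_neg_nat (a l : ℕ) (h : l ≤ a) :
    poch (-(a : ℝ)) l = (-1) ^ l * (a.factorial : ℝ) / ((a - l).factorial : ℝ) := by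
  have e : a = (a - l) + l := by omega
  rw [e, poch_neg_nat' (a - l) l]
  have : a - l + l - l = a - l := by omega
  rw [this]

lemma poch_neg_nat_zero (s : ℕ) (L : ℕ) (h : s < L) : poch (-(s : ℝ)) L = 0 := by
  apply Finset.prod_eq_zero (Finset.mem_range.2 h)
  simp

lemma poch_half (t : ℕ) :
    poch (1 / 2) t = ((2 * t).factorial : ℝ) / (4 ^ t * t.factorial) := by
  induction t with
  | zero => simp
  | succ t ih =>
      rw [poch_succ, ih]
      have e1 : (2 * (t + 1)).factorial = (2*t+2) * ((2*t+1) * (2*t).factorial) := by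
        rw [show 2*(t+1) = (2*t+1)+1 by omega, Nat.factorial_succ, Nat.factorial_succ]
      have e2 : (t+1).factorial = (t+1) * t.factorial := Nat.factorial_succ t
      rw [e1, e2]
      have h2 : ((t.factorial : ℝ)) ≠ 0 := by exact_mod_cast Nat.factorial_ne_zero _
      have h3 : (4:ℝ) ^ t ≠ 0 := by positivity
      push_cast
      field_simp
      ring

lemma fact_cast_ne (n : ℕ) : ((n.factorial : ℝ)) ≠ 0 := by
  exact_mod_cast n.factorial_ne_zero

lemma cC_zero (n : ℕ) : cC n 0 = 1 := by
  simp only [cC, Nat.sub_zero, pow_zero, Nat.factorial_zero]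
  have h1 := fact_cast_ne n
  have h2 := fact_cast_ne (2*n)
  push_cast
  field_simp

lemma cC_one (n : ℕ) (h : 1 ≤ n) : cC n 1 = 1 := by
  simp only [cC, Nat.factorial_one]
  have e1 : (2*n).factorial = (2*n) * (2*n-1).factorial := by
    rw [show 2*n = (2*n-1)+1 by omega, Nat.factorial_succ]
    simp
  have e2 : n.factorial = n * (n-1).factorial := by
    rw [show n = (n-1)+1 by omega, Nat.factorial_succ]
    simp
  rw [e1, e2]
  have h1 := fact_cast_ne (2*n-1)
  have h2 := fact_cast_ne (n-1)
  have h3 : (n:ℝ) ≠ 0 := by exact_mod_cast (by omega : n ≠ 0)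
  push_cast
  field_simp

/-- expansion helper: `(n+j)! = (n+j)⋯(n+1) n!` as reals, for small j via factorial_succ. -/
lemma fact_shift1 (n : ℕ) : (((n+1).factorial : ℝ)) = ((n:ℝ)+1) * (n.factorial : ℝ) := by
  rw [Nat.factorial_succ]; push_cast; ring

/-- The key coefficient recurrence. -/
lemma cC_rec (k t : ℕ) (ht : t < k + 3) :
    cC (k+2) t = (if t < k + 2 then cC (k+1) t else 0)
      + (if 2 ≤ t then cC k (t-2) / (((2*k+3) : ℝ) * ((2*k+1) : ℝ)) else 0) := by
  have hD : (((2*k+3):ℝ) * ((2*k+1):ℝ)) ≠ 0 := by positivity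
  match t, ht with
  | 0, _ =>
      simp [cC_zero]
  | 1, _ =>
      have : (1:ℕ) < k + 2 := by omega
      simp only [this, if_true]
      rw [cC_one (k+2) (by omega), cC_one (k+1) (by omega)]
      norm_num
  | (r+2), ht =>
      have hif : (2 ≤ r + 2) := by omega
      simp only [hif, if_true, Nat.add_sub_cancel]
      rcases Nat.lt_or_ge r k with hr | hr
      · -- generic case: set s := k - 1 - r, k = s + r + 1
        obtain ⟨s, rfl⟩ : ∃ s, k = s + r + 1 := ⟨k - r - 1, by omega⟩
        have hif2 : r + 2 < s + r + 1 + 2 := by omega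
        simp only [hif2, if_true]
        simp only [cC]
        rw [show 2*(s+r+1+2) - (r+2) = 2*s+r+4 by omega,
            show (s+r+1+2) - (r+2) = s+1 by omega,
            show 2*(s+r+1+1) - (r+2) = 2*s+r+2 by omega,
            show (s+r+1+1) - (r+2) = s by omega,
            show 2*(s+r+1) - r = 2*s+r+2 by omega,
            show (s+r+1) - r = s+1 by omega]
        have e1 : (((2*(s+r+1+2)).factorial : ℝ))
            = (2*s+2*r+6) * (2*s+2*r+5) * ((2*(s+r+1+1)).factorial : ℝ) := by
          rw [show 2*(s+r+1+2) = (2*(s+r+1+1))+1+1 by omega, fact_shift1, fact_shift1]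
          push_cast; ring
        have e2 : (((2*(s+r+1+1)).factorial : ℝ))
            = (2*s+2*r+4) * (2*s+2*r+3) * ((2*(s+r+1)).factorial : ℝ) := by
          rw [show 2*(s+r+1+1) = (2*(s+r+1))+1+1 by omega, fact_shift1, fact_shift1]
          push_cast; ring
        have e3 : (((s+r+1+2).factorial : ℝ))
            = (s+r+3) * (s+r+2) * ((s+r+1).factorial : ℝ) := by
          rw [show s+r+1+2 = (s+r+1)+1+1 by omega, fact_shift1, fact_shift1]
          push_cast; ring
        have e4 : (((s+r+1+1).factorial : ℝ)) = (s+r+2) * ((s+r+1).factorial : ℝ) := by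
          rw [show s+r+1+1 = (s+r+1)+1 by omega, fact_shift1]
          push_cast; ring
        have e5 : (((2*s+r+4).factorial : ℝ))
            = (2*s+r+4) * (2*s+r+3) * ((2*s+r+2).factorial : ℝ) := by
          rw [show 2*s+r+4 = (2*s+r+2)+1+1 by omega, fact_shift1, fact_shift1]
          push_cast; ring
        have e6 : (((s+1).factorial : ℝ)) = (s+1) * (s.factorial : ℝ) := by
          rw [fact_shift1]
        have e7 : (((r+2).factorial : ℝ)) = (r+2) * (r+1) * (r.factorial : ℝ) := by
          rw [show r+2 = r+1+1 by omega, fact_shift1, fact_shift1]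
          push_cast; ring
        rw [e1, e2, e3, e4, e5, e6, e7]
        have n1 := fact_cast_ne (2*(s+r+1))
        have n2 := fact_cast_ne (s+r+1)
        have n3 := fact_cast_ne (2*s+r+2)
        have n4 := fact_cast_ne s
        have n5 := fact_cast_ne r
        have p1 : ((s:ℝ)+1) ≠ 0 := by positivity
        push_cast
        field_simp
        ring
      · -- diagonal case r = k
        have hreq : r = k := by omega
        subst hreq
        rw [if_neg (by omega : ¬ (r + 2 < r + 2)), zero_add]
        simp only [cC]
        rw [show 2*(r+2) - (r+2) = r+2 by omega,
            show (r+2) - (r+2) = 0 by omega,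
            show 2*r - r = r by omega,
            show r - r = 0 by omega]
        have e1 : (((2*(r+2)).factorial : ℝ))
            = (2*r+4) * (2*r+3) * (2*r+2) * (2*r+1) * ((2*r).factorial : ℝ) := by
          rw [show 2*(r+2) = (2*r)+1+1+1+1 by omega, fact_shift1, fact_shift1, fact_shift1,
            fact_shift1]
          push_cast; ring
        have e2 : (((r+2).factorial : ℝ)) = (r+2) * (r+1) * (r.factorial : ℝ) := by
          rw [show r+2 = r+1+1 by omega, fact_shift1, fact_shift1]
          push_cast; ring
        rw [e1, e2]
        have n1 := fact_cast_ne (2*r)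
        have n2 := fact_cast_ne r
        push_cast
        field_simp
        ring

lemma dd_eq_zero {j k : ℕ} (h : ¬ (k ≤ j ∧ j ≤ 2 * k + 1)) : dd j k = 0 := if_neg h

lemma dd_eq (j k : ℕ) (h1 : k ≤ j) (h2 : j ≤ 2*k+1) (a b : ℕ) (ha : j - k = a)
    (hb : 2*k+1-j = b) :
    dd j k = (-1) ^ a * (((j + 1).factorial : ℝ) * ((2 * k).factorial : ℝ)) /
      ((a.factorial : ℝ) * (b.factorial : ℝ) * 2 ^ a * 2 ^ k * (k.factorial : ℝ)) := by
  rw [dd, if_pos ⟨h1, h2⟩, ha, hb]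

lemma dd_rec' (j t : ℕ) (ht : t ≤ j + 2) :
    dd (j+2) t = (if 2 ≤ t then ((2*(t-2)+3 : ℕ) : ℝ) * ((2*(t-2)+1 : ℕ) : ℝ) * dd j (t-2) else 0)
      - (if 1 ≤ t then ((2*(t-1)+3 : ℕ) : ℝ) * ((2*(t-1)+1 : ℕ) : ℝ) * dd j (t-1) else 0) := by
  rcases Nat.lt_or_ge j (2*t) with hreg | hreg
  · -- j ≤ 2t-1 : LHS valid
    rcases Nat.lt_or_ge j (2*t - 2) with hreg2 | hreg2
    · -- j ≤ 2t-3 : term1 region (includes t = j+2 diagonal)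
      rcases Nat.lt_or_ge j t with hd | hd
      · -- t = j+1 or t = j+2
        rcases (by omega : t = j + 1 ∨ t = j + 2) with rfl | rfl
        · -- t = j+1 : j ≤ 2t-3 means j ≤ 2j-1, needs j ≥ 1
          -- term2 : dd j j valid; term1: dd j (j-1) : j ≤ 2(j-1)+1 = 2j-1 ok if j ≥ 1
          obtain ⟨f, rfl⟩ : ∃ f, j = f + 1 := ⟨j - 1, by omega⟩
          rw [if_pos (by omega : 2 ≤ f + 1 + 1), if_pos (by omega : 1 ≤ f + 1 + 1)]
          rw [show f+1+1-2 = f by omega, show f+1+1-1 = f+1 by omega]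
          rw [dd_eq (f+1+2) (f+1+1) (by omega) (by omega) 1 (f+2) (by omega) (by omega),
              dd_eq (f+1) f (by omega) (by omega) 1 f (by omega) (by omega),
              dd_eq (f+1) (f+1) (by omega) (by omega) 0 (f+2) (by omega) (by omega)]
          rw [show f+1+2+1 = f+4 by omega, show 2*(f+1+1) = 2*f+4 by omega,
              show f+1+1 = f+2 by omega, show 2*(f+1) = 2*f+2 by omega]
          have e1 : ((f+4).factorial : ℝ) = (f+4)*(f+3)*(f+2)*(f+1)*(f.factorial : ℝ) := by
            rw [show f+4 = f+1+1+1+1 by omega, fact_shift1, fact_shift1, fact_shift1,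
              fact_shift1]
            push_cast; ring
          have e2 : ((2*f+4).factorial : ℝ)
              = (2*f+4)*(2*f+3)*(2*f+2)*(2*f+1)*((2*f).factorial : ℝ) := by
            rw [show 2*f+4 = 2*f+1+1+1+1 by omega, fact_shift1, fact_shift1, fact_shift1,
              fact_shift1]
            push_cast; ring
          have e3 : ((2*f+2).factorial : ℝ) = (2*f+2)*(2*f+1)*((2*f).factorial : ℝ) := by
            rw [show 2*f+2 = 2*f+1+1 by omega, fact_shift1, fact_shift1]
            push_cast; ring
          have e4 : ((f+2).factorial : ℝ) = (f+2)*(f+1)*(f.factorial : ℝ) := by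
            rw [show f+2 = f+1+1 by omega, fact_shift1, fact_shift1]
            push_cast; ring
          have e5 : ((f+1).factorial : ℝ) = (f+1)*(f.factorial : ℝ) := fact_shift1 f
          rw [e1, e2, e3, e4, e5]
          have n1 := fact_cast_ne f
          have n2 := fact_cast_ne (2*f)
          have n3 : (2:ℝ)^f ≠ 0 := by positivity
          push_cast
          field_simp
          ring
        · -- t = j+2 : diagonal
          rw [if_pos (by omega : 2 ≤ j + 2), if_pos (by omega : 1 ≤ j + 2)]
          rw [show j+2-2 = j by omega, show j+2-1 = j+1 by omega]
          rw [dd_eq (j+2) (j+2) (by omega) (by omega) 0 (j+3) (by omega) (by omega),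
              dd_eq j j (by omega) (by omega) 0 (j+1) (by omega) (by omega),
              dd_eq_zero (by omega : ¬ (j+1 ≤ j ∧ j ≤ 2*(j+1)+1))]
          have e1 : ((2*(j+2)).factorial : ℝ)
              = (2*j+4)*(2*j+3)*(2*j+2)*(2*j+1)*((2*j).factorial : ℝ) := by
            rw [show 2*(j+2) = 2*j+1+1+1+1 by omega, fact_shift1, fact_shift1, fact_shift1,
              fact_shift1]
            push_cast; ring
          have e2 : ((j+2+1).factorial : ℝ) = (j+3)*(j+2)*(j+1)*(j.factorial : ℝ) := by
            rw [show j+2+1 = j+1+1+1 by omega, fact_shift1, fact_shift1, fact_shift1]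
            push_cast; ring
          have e4 : ((j+2).factorial : ℝ) = (j+2)*(j+1)*(j.factorial : ℝ) := by
            rw [show j+2 = j+1+1 by omega, fact_shift1, fact_shift1]
            push_cast; ring
          have e5 : ((j+1).factorial : ℝ) = (j+1)*(j.factorial : ℝ) := fact_shift1 j
          rw [e1, e2, e4, e5]
          have n1 := fact_cast_ne j
          have n2 := fact_cast_ne (2*j)
          have n3 : (2:ℝ)^j ≠ 0 := by positivity
          simp only [Nat.factorial_zero, Nat.cast_one]
          push_cast
          field_simp
          ring
      · -- interior : t ≤ j, j ≤ 2t-3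
        obtain ⟨e, f, rfl, rfl⟩ : ∃ e f, t = e+f+3 ∧ j = 2*e+f+3 := by
          refine ⟨j - t, 2*t - 3 - j, by omega, by omega⟩
        rw [if_pos (by omega : 2 ≤ e+f+3), if_pos (by omega : 1 ≤ e+f+3)]
        rw [show e+f+3-2 = e+f+1 by omega, show e+f+3-1 = e+f+2 by omega]
        rw [dd_eq (2*e+f+3+2) (e+f+3) (by omega) (by omega) (e+2) (f+2) (by omega) (by omega),
            dd_eq (2*e+f+3) (e+f+1) (by omega) (by omega) (e+2) f (by omega) (by omega),
            dd_eq (2*e+f+3) (e+f+2) (by omega) (by omega) (e+1) (f+2) (by omega) (by omega)]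
        rw [show 2*e+f+3+2+1 = 2*e+f+6 by omega, show 2*(e+f+3) = 2*e+2*f+6 by omega,
            show 2*e+f+3+1 = 2*e+f+4 by omega, show 2*(e+f+1) = 2*e+2*f+2 by omega,
            show 2*(e+f+2) = 2*e+2*f+4 by omega]
        have e1 : ((2*e+f+6).factorial : ℝ)
            = (2*e+f+6)*(2*e+f+5)*((2*e+f+4).factorial : ℝ) := by
          rw [show 2*e+f+6 = 2*e+f+4+1+1 by omega, fact_shift1, fact_shift1]
          push_cast; ring
        have e2 : ((2*e+2*f+6).factorial : ℝ)
            = (2*e+2*f+6)*(2*e+2*f+5)*(2*e+2*f+4)*(2*e+2*f+3)*((2*e+2*f+2).factorial : ℝ) := by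
          rw [show 2*e+2*f+6 = 2*e+2*f+2+1+1+1+1 by omega, fact_shift1, fact_shift1,
            fact_shift1, fact_shift1]
          push_cast; ring
        have e3 : ((2*e+2*f+4).factorial : ℝ)
            = (2*e+2*f+4)*(2*e+2*f+3)*((2*e+2*f+2).factorial : ℝ) := by
          rw [show 2*e+2*f+4 = 2*e+2*f+2+1+1 by omega, fact_shift1, fact_shift1]
          push_cast; ring
        have e4 : ((e+2).factorial : ℝ) = (e+2)*(e+1)*(e.factorial : ℝ) := by
          rw [show e+2 = e+1+1 by omega, fact_shift1, fact_shift1]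
          push_cast; ring
        have e5 : ((e+1).factorial : ℝ) = (e+1)*(e.factorial : ℝ) := fact_shift1 e
        have e6 : ((f+2).factorial : ℝ) = (f+2)*(f+1)*(f.factorial : ℝ) := by
          rw [show f+2 = f+1+1 by omega, fact_shift1, fact_shift1]
          push_cast; ring
        have e7 : ((e+f+3).factorial : ℝ)
            = (e+f+3)*(e+f+2)*((e+f+1).factorial : ℝ) := by
          rw [show e+f+3 = e+f+1+1+1 by omega, fact_shift1, fact_shift1]
          push_cast; ring
        have e8 : ((e+f+2).factorial : ℝ) = (e+f+2)*((e+f+1).factorial : ℝ) := by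
          rw [show e+f+2 = e+f+1+1 by omega, fact_shift1]
          push_cast; ring
        rw [e1, e2, e3, e4, e5, e6, e7, e8]
        have n1 := fact_cast_ne e
        have n2 := fact_cast_ne f
        have n3 := fact_cast_ne (e+f+1)
        have n4 := fact_cast_ne (2*e+f+4)
        have n5 := fact_cast_ne (2*e+2*f+2)
        have n6 : (2:ℝ)^e ≠ 0 := by positivity
        have n7 : (2:ℝ)^f ≠ 0 := by positivity
        push_cast
        field_simp
        ring
    · -- 2t-2 ≤ j ≤ 2t-1 : region A
      have hterm1 : (if 2 ≤ t then ((2*(t-2)+3 : ℕ) : ℝ) * ((2*(t-2)+1 : ℕ) : ℝ) * dd j (t-2) else 0) = 0 := by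
        split_ifs with h2t
        · rw [dd_eq_zero (by omega : ¬ (t-2 ≤ j ∧ j ≤ 2*(t-2)+1)), mul_zero]
        · rfl
      rw [hterm1]
      have h1t : 1 ≤ t := by omega
      rw [if_pos h1t]
      rcases (by omega : j = 2*t - 1 ∨ j = 2*t-2) with hj | hj
      · -- j = 2t-1, t = w+1, j = 2w+1
        obtain ⟨w, rfl, rfl⟩ : ∃ w, t = w+1 ∧ j = 2*w+1 := ⟨t - 1, by omega, by omega⟩
        rw [show w+1-1 = w by omega]
        rw [dd_eq (2*w+1+2) (w+1) (by omega) (by omega) (w+2) 0 (by omega) (by omega),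
            dd_eq (2*w+1) w (by omega) (by omega) (w+1) 0 (by omega) (by omega)]
        rw [show 2*w+1+2+1 = 2*w+4 by omega, show 2*(w+1) = 2*w+2 by omega,
            show 2*w+1+1 = 2*w+2 by omega]
        have e1 : ((2*w+4).factorial : ℝ) = (2*w+4)*(2*w+3)*((2*w+2).factorial : ℝ) := by
          rw [show 2*w+4 = 2*w+2+1+1 by omega, fact_shift1, fact_shift1]
          push_cast; ring
        have e2 : ((2*w+2).factorial : ℝ) = (2*w+2)*(2*w+1)*((2*w).factorial : ℝ) := by
          rw [show 2*w+2 = 2*w+1+1 by omega, fact_shift1, fact_shift1]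
          push_cast; ring
        have e3 : ((w+2).factorial : ℝ) = (w+2)*(w+1)*(w.factorial : ℝ) := by
          rw [show w+2 = w+1+1 by omega, fact_shift1, fact_shift1]
          push_cast; ring
        have e4 : ((w+1).factorial : ℝ) = (w+1)*(w.factorial : ℝ) := fact_shift1 w
        rw [e1, e2, e3, e4]
        have n1 := fact_cast_ne w
        have n2 := fact_cast_ne (2*w)
        have n3 : (2:ℝ)^w ≠ 0 := by positivity
        push_cast
        field_simp
        ring
      · -- j = 2t-2, t = w+1, j = 2w
        obtain ⟨w, rfl, rfl⟩ : ∃ w, t = w+1 ∧ j = 2*w := ⟨t - 1, by omega, by omega⟩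
        rw [show w+1-1 = w by omega]
        rw [dd_eq (2*w+2) (w+1) (by omega) (by omega) (w+1) 1 (by omega) (by omega),
            dd_eq (2*w) w (by omega) (by omega) w 1 (by omega) (by omega)]
        rw [show 2*w+2+1 = 2*w+3 by omega, show 2*(w+1) = 2*w+2 by omega]
        have e1 : ((2*w+3).factorial : ℝ)
            = (2*w+3)*(2*w+2)*(2*w+1)*((2*w).factorial : ℝ) := by
          rw [show 2*w+3 = 2*w+1+1+1 by omega, fact_shift1, fact_shift1, fact_shift1]
          push_cast; ring
        have e2 : ((2*w+2).factorial : ℝ) = (2*w+2)*(2*w+1)*((2*w).factorial : ℝ) := by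
          rw [show 2*w+2 = 2*w+1+1 by omega, fact_shift1, fact_shift1]
          push_cast; ring
        have e3 : ((2*w+1).factorial : ℝ) = (2*w+1)*((2*w).factorial : ℝ) := by
          rw [fact_shift1]
          push_cast; ring
        have e4 : ((w+1).factorial : ℝ) = (w+1)*(w.factorial : ℝ) := fact_shift1 w
        rw [e1, e2, e3, e4]
        have n1 := fact_cast_ne w
        have n2 := fact_cast_ne (2*w)
        have n3 : (2:ℝ)^w ≠ 0 := by positivity
        push_cast
        field_simp
        ring
  · -- j ≥ 2t : everything 0
    have l1 : dd (j+2) t = 0 := dd_eq_zero (by omega)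
    rw [l1]
    have hterm1 : (if 2 ≤ t then ((2*(t-2)+3 : ℕ) : ℝ) * ((2*(t-2)+1 : ℕ) : ℝ) * dd j (t-2) else 0) = 0 := by
      split_ifs with h
      · rw [dd_eq_zero (by omega : ¬ (t-2 ≤ j ∧ j ≤ 2*(t-2)+1)), mul_zero]
      · rfl
    have hterm2 : (if 1 ≤ t then ((2*(t-1)+3 : ℕ) : ℝ) * ((2*(t-1)+1 : ℕ) : ℝ) * dd j (t-1) else 0) = 0 := by
      split_ifs with h
      · rw [dd_eq_zero (by omega : ¬ (t-1 ≤ j ∧ j ≤ 2*(t-1)+1)), mul_zero]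
      · rfl
    rw [hterm1, hterm2]
    ring


lemma dd_rec (j t : ℕ) (ht : t ≤ j + 2) :
    dd (j+2) t = (if 2 ≤ t then ((2*(t-2)+3 : ℕ) : ℝ) * ((2*(t-2)+1 : ℕ) : ℝ) * dd j (t-2) else 0)
      - (if 1 ≤ t then ((2*(t-1)+3 : ℕ) : ℝ) * ((2*(t-1)+1 : ℕ) : ℝ) * dd j (t-1) else 0) := dd_rec' j t ht

lemma besselQ_rec (k : ℕ) (u : ℝ) :
    besselQ (k+2) u = besselQ (k+1) u
      + u^2 / (((2*k+3) : ℝ) * ((2*k+1) : ℝ)) * besselQ k u := by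
  have hD : (((2*k+3):ℝ) * ((2*k+1):ℝ)) ≠ 0 := by positivity
  rw [besselQ_eq (k+2), besselQ_eq (k+1), besselQ_eq k]
  have step : ∀ t ∈ Finset.range (k+3), cC (k+2) t * u ^ t
      = (if t < k + 2 then cC (k+1) t else 0) * u ^ t
        + (if 2 ≤ t then cC k (t-2) / (((2*k+3) : ℝ) * ((2*k+1) : ℝ)) else 0) * u ^ t := by
    intro t htm
    rw [cC_rec k t (Finset.mem_range.mp htm), add_mul]
  rw [Finset.sum_congr rfl step, Finset.sum_add_distrib]
  congr 1
  · rw [Finset.sum_range_succ, if_neg (by omega : ¬ (k+2 < k+2)), zero_mul, add_zero]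
    exact Finset.sum_congr rfl fun t htm => by
      rw [if_pos (Finset.mem_range.mp htm)]
  · rw [Finset.sum_range_succ', Finset.sum_range_succ']
    simp only [if_neg (by omega : ¬ (2 ≤ 1)), if_neg (by omega : ¬ (2 ≤ 0)), zero_mul,
      add_zero]
    rw [Finset.mul_sum]
    exact Finset.sum_congr rfl fun t htm => by
      rw [if_pos (by omega : 2 ≤ t + 1 + 1)]
      have : t + 1 + 1 - 2 = t := by omega
      rw [this]
      field_simp
      ring

lemma besselQ_zero (u : ℝ) : besselQ 0 u = 1 := by
  rw [besselQ_eq]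
  simp [cC_zero]

lemma besselQ_one (u : ℝ) : besselQ 1 u = 1 + u := by
  rw [besselQ_eq, Finset.sum_range_succ, Finset.sum_range_one, cC_zero, cC_one 1 le_rfl]
  ring

lemma monomial_expand (j : ℕ) (u : ℝ) :
    u ^ j = ∑ t ∈ Finset.range (j + 1), dd j t * besselQ t u := by
  induction j using Nat.strong_induction_on generalizing u with
  | _ j ih =>
    match j with
    | 0 =>
        rw [Finset.sum_range_one, besselQ_zero]
        norm_num [dd, Nat.factorial]
    | 1 =>
        rw [Finset.sum_range_succ, Finset.sum_range_one, besselQ_zero, besselQ_one]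
        norm_num [dd, Nat.factorial]
    | (j+2) =>
        have key : u ^ (j+2) = ∑ t ∈ Finset.range (j+1),
            dd j t * ((((2*t+3):ℕ):ℝ) * (((2*t+1):ℕ):ℝ)
              * (besselQ (t+2) u - besselQ (t+1) u)) := by
          have h1 : u ^ (j+2) = u^2 * u^j := by ring
          rw [h1, ih j (by omega), Finset.mul_sum]
          refine Finset.sum_congr rfl fun t _ => ?_
          have h2 : besselQ (t+2) u - besselQ (t+1) u
              = u^2 / (((2*t+3) : ℝ) * ((2*t+1) : ℝ)) * besselQ t u := by
            rw [besselQ_rec t u]; ring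
          rw [h2]
          have hD : (((2*t+3):ℝ) * ((2*t+1):ℝ)) ≠ 0 := by positivity
          push_cast
          field_simp
        rw [key]
        have expand : ∀ t ∈ Finset.range (j+3),
            dd (j+2) t * besselQ t u
            = (if 2 ≤ t then ((2*(t-2)+3:ℕ):ℝ) * ((2*(t-2)+1:ℕ):ℝ) * dd j (t-2) else 0)
                * besselQ t u
              - (if 1 ≤ t then ((2*(t-1)+3:ℕ):ℝ) * ((2*(t-1)+1:ℕ):ℝ) * dd j (t-1) else 0)
                * besselQ t u := by
          intro t htm
          have h' := Finset.mem_range.mp htm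
          rw [dd_rec j t (by omega : t ≤ j + 2), sub_mul]
        rw [Finset.sum_congr rfl expand, Finset.sum_sub_distrib]
        have eA : ∑ t ∈ Finset.range (j+3),
            (if 2 ≤ t then ((2*(t-2)+3:ℕ):ℝ) * ((2*(t-2)+1:ℕ):ℝ) * dd j (t-2) else 0)
              * besselQ t u
            = ∑ t ∈ Finset.range (j+1),
              dd j t * (((2*t+3:ℕ):ℝ) * ((2*t+1:ℕ):ℝ) * besselQ (t+2) u) := by
          rw [Finset.sum_range_succ', Finset.sum_range_succ']
          simp only [if_neg (by omega : ¬ (2 ≤ 1)), if_neg (by omega : ¬ (2 ≤ 0)), zero_mul,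
            add_zero]
          refine Finset.sum_congr rfl fun t htm => ?_
          rw [if_pos (by omega : 2 ≤ t + 1 + 1)]
          have : t + 1 + 1 - 2 = t := by omega
          rw [this]
          ring
        have eB : ∑ t ∈ Finset.range (j+3),
            (if 1 ≤ t then ((2*(t-1)+3:ℕ):ℝ) * ((2*(t-1)+1:ℕ):ℝ) * dd j (t-1) else 0)
              * besselQ t u
            = ∑ t ∈ Finset.range (j+1),
              dd j t * (((2*t+3:ℕ):ℝ) * ((2*t+1:ℕ):ℝ) * besselQ (t+1) u) := by
          rw [Finset.sum_range_succ']
          simp only [if_neg (by omega : ¬ (1 ≤ 0)), zero_mul, add_zero]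
          have step2 : ∀ t ∈ Finset.range (j+2),
              (if 1 ≤ t + 1 then ((2*(t+1-1)+3:ℕ):ℝ) * ((2*(t+1-1)+1:ℕ):ℝ) * dd j (t+1-1) else 0)
                * besselQ (t+1) u
              = dd j t * (((2*t+3:ℕ):ℝ) * ((2*t+1:ℕ):ℝ) * besselQ (t+1) u) := by
            intro t _
            rw [if_pos (by omega : 1 ≤ t + 1)]
            have : t + 1 - 1 = t := by omega
            rw [this]
            ring
          rw [Finset.sum_congr rfl step2, Finset.sum_range_succ]
          have hzero : dd j (j+1) = 0 := by
            rw [dd, if_neg (by omega)]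
          rw [hzero, zero_mul, add_zero]
        rw [eA, eB]
        rw [← Finset.sum_sub_distrib]
        refine Finset.sum_congr rfl fun t _ => ?_
        ring

noncomputable def besselP (n : ℕ) : Polynomial ℝ :=
  ∑ k ∈ Finset.range (n + 1), Polynomial.C (cC n k) * Polynomial.X ^ k

lemma besselP_eval (n : ℕ) (u : ℝ) : (besselP n).eval u = besselQ n u := by
  rw [besselP, besselQ_eq, Polynomial.eval_finset_sum]
  simp

lemma besselP_coeff (n t : ℕ) :
    (besselP n).coeff t = if t ≤ n then cC n t else 0 := by
  rw [besselP, Polynomial.finset_sum_coeff]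
  simp only [Polynomial.coeff_C_mul, Polynomial.coeff_X_pow, mul_ite, mul_one, mul_zero]
  rw [Finset.sum_ite_eq (Finset.range (n+1)) t (fun k => cC n k)]
  simp [Nat.lt_succ_iff]

lemma cC_pos (n k : ℕ) : 0 < cC n k := by
  rw [cC]
  have h1 : (0:ℝ) < (n.factorial : ℝ) := by exact_mod_cast n.factorial_pos
  have h2 : (0:ℝ) < ((2*n - k).factorial : ℝ) := by exact_mod_cast (2*n - k).factorial_pos
  have h3 : (0:ℝ) < ((2*n).factorial : ℝ) := by exact_mod_cast (2*n).factorial_pos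
  have h4 : (0:ℝ) < ((n - k).factorial : ℝ) := by exact_mod_cast (n - k).factorial_pos
  have h5 : (0:ℝ) < (k.factorial : ℝ) := by exact_mod_cast k.factorial_pos
  positivity

lemma indep (N : ℕ) (γ : ℕ → ℝ)
    (h : ∀ u : ℝ, ∑ i ∈ Finset.range N, γ i * besselQ i u = 0) :
    ∀ i < N, γ i = 0 := by
  induction N with
  | zero => omega
  | succ N ih =>
      have hP : (∑ i ∈ Finset.range (N+1), Polynomial.C (γ i) * besselP i) = 0 := by
        apply Polynomial.funext
        intro u
        rw [Polynomial.eval_finset_sum]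
        simp only [Polynomial.eval_mul, Polynomial.eval_C, besselP_eval, Polynomial.eval_zero]
        exact h u
      have hN : γ N = 0 := by
        have hc := congrArg (fun p => Polynomial.coeff p N) hP
        simp only [Polynomial.finset_sum_coeff, Polynomial.coeff_C_mul,
          Polynomial.coeff_zero] at hc
        rw [Finset.sum_range_succ] at hc
        have hzero : ∀ i ∈ Finset.range N, γ i * (besselP i).coeff N = 0 := by
          intro i hi
          have := Finset.mem_range.mp hi
          rw [besselP_coeff, if_neg (by omega : ¬ (N ≤ i)), mul_zero]
        rw [Finset.sum_eq_zero hzero, zero_add, besselP_coeff, if_pos le_rfl] at hc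
        rcases mul_eq_zero.mp hc with h' | h'
        · exact h'
        · exact absurd h' (ne_of_gt (cC_pos N N))
      have h' : ∀ u : ℝ, ∑ i ∈ Finset.range N, γ i * besselQ i u = 0 := by
        intro u
        have := h u
        rw [Finset.sum_range_succ, hN, zero_mul, add_zero] at this
        exact this
      intro i hi
      rcases Nat.lt_succ_iff_lt_or_eq.mp hi with h1 | rfl
      · exact ih h' i h1
      · exact hN

lemma dd_vanish {j t : ℕ} (h : j < t) : dd j t = 0 :=
  dd_eq_zero (by omega)

/-- the constructed linearization coefficients -/
noncomputable def betaC (n m : ℕ) (a1 a2 : ℝ) (t : ℕ) : ℝ :=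
  ∑ p ∈ Finset.range (n+1), ∑ q ∈ Finset.range (m+1),
    cC n p * cC m q * a1^p * a2^q * dd (p+q) t

lemma product_expand (n m : ℕ) (a1 a2 : ℝ) (u : ℝ) :
    besselQ n (a1 * u) * besselQ m (a2 * u)
      = ∑ t ∈ Finset.range (n + m + 1), betaC n m a1 a2 t * besselQ t u := by
  rw [besselQ_eq n, besselQ_eq m]
  have step1 : ∀ p ∈ Finset.range (n+1), ∀ q ∈ Finset.range (m+1),
      (cC n p * (a1*u)^p) * (cC m q * (a2*u)^q)
      = ∑ t ∈ Finset.range (n+m+1),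
          cC n p * cC m q * a1^p * a2^q * dd (p+q) t * besselQ t u := by
    intro p hp q hq
    have hpq : p + q + 1 ≤ n + m + 1 := by
      have := Finset.mem_range.mp hp
      have := Finset.mem_range.mp hq
      omega
    have expand : ((a1*u)^p) * ((a2*u)^q) = a1^p * a2^q * u^(p+q) := by
      rw [mul_pow, mul_pow, pow_add]; ring
    calc (cC n p * (a1*u)^p) * (cC m q * (a2*u)^q)
        = cC n p * cC m q * a1^p * a2^q * u^(p+q) := by rw [mul_mul_mul_comm, expand]; ring
      _ = cC n p * cC m q * a1^p * a2^q
            * ∑ t ∈ Finset.range (p+q+1), dd (p+q) t * besselQ t u := by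
          rw [← monomial_expand (p+q) u]
      _ = ∑ t ∈ Finset.range (p+q+1),
            cC n p * cC m q * a1^p * a2^q * dd (p+q) t * besselQ t u := by
          rw [Finset.mul_sum]; exact Finset.sum_congr rfl fun t _ => by ring
      _ = ∑ t ∈ Finset.range (n+m+1),
            cC n p * cC m q * a1^p * a2^q * dd (p+q) t * besselQ t u := by
          refine Finset.sum_subset (Finset.range_subset_range.mpr hpq) ?_
          intro t htm htn
          rw [dd_vanish (by
            have := Finset.mem_range.mp htm
            have h2 : ¬ (t < p + q + 1) := fun hc => htn (Finset.mem_range.mpr hc)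
            omega), mul_zero, zero_mul]
  calc (∑ p ∈ Finset.range (n+1), cC n p * (a1*u)^p) * ∑ q ∈ Finset.range (m+1), cC m q * (a2*u)^q
      = ∑ p ∈ Finset.range (n+1), ∑ q ∈ Finset.range (m+1),
          (cC n p * (a1*u)^p) * (cC m q * (a2*u)^q) := Finset.sum_mul_sum _ _ _ _
    _ = ∑ p ∈ Finset.range (n+1), ∑ q ∈ Finset.range (m+1), ∑ t ∈ Finset.range (n+m+1),
          cC n p * cC m q * a1^p * a2^q * dd (p+q) t * besselQ t u :=
        Finset.sum_congr rfl fun p hp => Finset.sum_congr rfl fun q hq => step1 p hp q hq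
    _ = ∑ p ∈ Finset.range (n+1), ∑ t ∈ Finset.range (n+m+1), ∑ q ∈ Finset.range (m+1),
          cC n p * cC m q * a1^p * a2^q * dd (p+q) t * besselQ t u :=
        Finset.sum_congr rfl fun p _ => Finset.sum_comm
    _ = ∑ t ∈ Finset.range (n+m+1), ∑ p ∈ Finset.range (n+1), ∑ q ∈ Finset.range (m+1),
          cC n p * cC m q * a1^p * a2^q * dd (p+q) t * besselQ t u :=
        Finset.sum_comm
    _ = ∑ t ∈ Finset.range (n + m + 1), betaC n m a1 a2 t * besselQ t u := by
        refine Finset.sum_congr rfl fun t _ => ?_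
        rw [betaC, Finset.sum_mul]
        exact Finset.sum_congr rfl fun p _ => by rw [Finset.sum_mul]

lemma termEq (n m k p q i l : ℕ) (a1 a2 : ℝ) (ha1 : a1 ≠ 0) (ha2 : a2 ≠ 0)
    (hp : p ≤ n) (hq : q ≤ m) (hi : i + k = p + m) (hl : l + k = p + q)
    (hlk : l ≤ k + 1) (hknm : k ≤ n + m) :
    (a1 ^ ((k : ℤ) - (m : ℤ)) * a2 ^ m * poch (1 / 2) k /
        (4 ^ (m + n - k) * ((m + n - k).factorial : ℝ) * poch (1 / 2) n * poch (1 / 2) m)) *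
      (a1 ^ i * ((m + n - k).choose i : ℝ) *
          poch (-(m : ℝ) + (k : ℝ) + (i : ℝ) + 1) (2 * (m + n - k - i)) * a2 ^ (-(i : ℤ)) *
        (poch ((k : ℝ) + 2) l * poch (-(k : ℝ) - 1) l * poch (-(i : ℝ)) l /
              (poch (-(m : ℝ) - (i : ℝ)) l * (l.factorial : ℝ)) *
            poch ((m : ℝ) - (i : ℝ) + 1 + (l : ℝ)) (2 * i - l) * a2 ^ l))
    = cC n p * cC m q * a1 ^ p * a2 ^ q * dd (p + q) k := by
  have hli : l ≤ i := by omega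
  -- pochhammer rewrites
  rw [poch_half k, poch_half n, poch_half m]
  rw [show (-(m : ℝ) + (k : ℝ) + (i : ℝ) + 1) = ((p : ℕ) : ℝ) + 1 by
    have := congrArg (fun x : ℕ => (x : ℝ)) hi
    push_cast at this ⊢
    linarith]
  rw [poch_nat p (2 * (m + n - k - i)), show p + 2 * (m + n - k - i) = 2 * n - p by omega]
  rw [show ((m : ℝ) - (i : ℝ) + 1 + (l : ℝ)) = ((q : ℕ) : ℝ) + 1 by
    have h1 := congrArg (fun x : ℕ => (x : ℝ)) hi
    have h2 := congrArg (fun x : ℕ => (x : ℝ)) hl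
    push_cast at h1 h2 ⊢
    linarith]
  rw [poch_nat q (2 * i - l), show q + (2 * i - l) = m + i by omega]
  rw [show ((k : ℝ) + 2) = (((k + 1 : ℕ)) : ℝ) + 1 by push_cast; ring]
  rw [poch_nat (k + 1) l, show k + 1 + l = k + l + 1 by omega]
  rw [show (-(k : ℝ) - 1) = -(((k + 1 : ℕ)) : ℝ) by push_cast; ring]
  rw [poch_neg_nat (k + 1) l hlk]
  rw [poch_neg_nat i l hli, show i - l = m - q by omega]
  rw [show (-(m : ℝ) - (i : ℝ)) = -(((m + i : ℕ)) : ℝ) by push_cast; ring]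
  rw [poch_neg_nat (m + i) l (by omega), show m + i - l = 2 * m - q by omega]
  rw [Nat.cast_choose ℝ (show i ≤ m + n - k by omega), show m + n - k - i = n - p by omega]
  rw [dd_eq (p + q) k (by omega) (by omega) l (k + 1 - l) (by omega) (by omega),
    show p + q + 1 = k + l + 1 by omega]
  simp only [cC]
  -- power rewrites
  rw [show a1 ^ ((k : ℤ) - (m : ℤ)) = a1 ^ p / a1 ^ i by
    rw [eq_div_iff (pow_ne_zero i ha1), ← zpow_natCast a1 p, ← zpow_natCast a1 i,
      ← zpow_add₀ ha1]
    congr 1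
    omega]
  rw [show a2 ^ (-(i : ℤ)) = (a2 ^ i)⁻¹ by rw [zpow_neg, zpow_natCast]]
  rw [show a2 ^ q = a2 ^ m * a2 ^ l / a2 ^ i by
    rw [eq_div_iff (pow_ne_zero i ha2), ← pow_add, ← pow_add]
    congr 1
    omega]
  rw [show (2 : ℝ) ^ q = 2 ^ k * 2 ^ l / 2 ^ p by
    rw [eq_div_iff (by positivity : (2:ℝ) ^ p ≠ 0), ← pow_add, ← pow_add]
    congr 1
    omega]
  rw [show (4 : ℝ) ^ (m + n - k) = 4 ^ n * 4 ^ m / 4 ^ k by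
    rw [eq_div_iff (by positivity : (4:ℝ) ^ k ≠ 0), ← pow_add, ← pow_add]
    congr 1
    omega]
  have f1 := fact_cast_ne p
  have f2 := fact_cast_ne q
  have f3 := fact_cast_ne (m - q)
  have f4 := fact_cast_ne (2 * m - q)
  have f5 := fact_cast_ne k
  have f6 := fact_cast_ne (k + 1)
  have f7 := fact_cast_ne (k + 1 - l)
  have f8 := fact_cast_ne l
  have f9 := fact_cast_ne i
  have f10 := fact_cast_ne (n - p)
  have f11 := fact_cast_ne (m + n - k)
  have f12 := fact_cast_ne (2 * n)
  have f13 := fact_cast_ne (2 * m)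
  have f14 := fact_cast_ne n
  have f15 := fact_cast_ne m
  have f16 := fact_cast_ne (2 * k)
  have f17 := fact_cast_ne (m + i)
  have f18 := fact_cast_ne (k + l + 1)
  have f19 := fact_cast_ne (2 * n - p)
  have f20 := fact_cast_ne (2 * m - q)
  have g1 : (4 : ℝ) ^ n ≠ 0 := by positivity
  have g2 : (4 : ℝ) ^ m ≠ 0 := by positivity
  have g3 : (4 : ℝ) ^ k ≠ 0 := by positivity
  have g4 : (2 : ℝ) ^ p ≠ 0 := by positivity
  have g5 : (2 : ℝ) ^ k ≠ 0 := by positivity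
  have g6 : (2 : ℝ) ^ l ≠ 0 := by positivity
  have g7 : a1 ^ i ≠ 0 := pow_ne_zero i ha1
  have g8 : a2 ^ i ≠ 0 := pow_ne_zero i ha2
  have g9 : a1 ^ p ≠ 0 := pow_ne_zero p ha1
  have g10 : a2 ^ m ≠ 0 := pow_ne_zero m ha2
  have g11 : a2 ^ l ≠ 0 := pow_ne_zero l ha2
  have g12 : ((-1 : ℝ)) ^ l ≠ 0 := pow_ne_zero l (by norm_num)
  field_simp

noncomputable def Gterm (n m k : ℕ) (a1 a2 : ℝ) (i l : ℕ) : ℝ :=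
  a1 ^ ((k : ℤ) - (m : ℤ)) * a2 ^ m * poch (1 / 2) k /
      (4 ^ (m + n - k) * ((m + n - k).factorial : ℝ) * poch (1 / 2) n * poch (1 / 2) m) *
    (a1 ^ i * ((m + n - k).choose i : ℝ) *
        poch (-(m : ℝ) + (k : ℝ) + (i : ℝ) + 1) (2 * (m + n - k - i)) * a2 ^ (-(i : ℤ)) *
      (poch ((k : ℝ) + 2) l * poch (-(k : ℝ) - 1) l * poch (-(i : ℝ)) l /
            (poch (-(m : ℝ) - (i : ℝ)) l * (l.factorial : ℝ)) *
          poch ((m : ℝ) - (i : ℝ) + 1 + (l : ℝ)) (2 * i - l) * a2 ^ l))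

noncomputable def Tterm (n m k : ℕ) (a1 a2 : ℝ) (p q : ℕ) : ℝ :=
  cC n p * cC m q * a1 ^ p * a2 ^ q * dd (p + q) k

lemma Gterm_eq_Tterm (n m k p q i l : ℕ) (a1 a2 : ℝ) (ha1 : a1 ≠ 0) (ha2 : a2 ≠ 0)
    (hp : p ≤ n) (hq : q ≤ m) (hi : i + k = p + m) (hl : l + k = p + q)
    (hlk : l ≤ k + 1) (hknm : k ≤ n + m) :
    Gterm n m k a1 a2 i l = Tterm n m k a1 a2 p q :=
  termEq n m k p q i l a1 a2 ha1 ha2 hp hq hi hl hlk hknm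

lemma Gterm_zero1 {n m k i l : ℕ} (a1 a2 : ℝ) (h : k + i < m) :
    Gterm n m k a1 a2 i l = 0 := by
  obtain ⟨s, hs⟩ : ∃ s, m = s + k + i + 1 := ⟨m - k - i - 1, by omega⟩
  have hz : poch (-(m : ℝ) + (k : ℝ) + (i : ℝ) + 1) (2 * (m + n - k - i)) = 0 := by
    rw [show (-(m : ℝ) + (k : ℝ) + (i : ℝ) + 1) = -((s : ℕ) : ℝ) by rw [hs]; push_cast; ring]
    exact poch_neg_nat_zero s _ (by omega)
  rw [Gterm, hz]
  ring

lemma Gterm_zero2 {n m k i l : ℕ} (a1 a2 : ℝ) (h : m + l < i) :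
    Gterm n m k a1 a2 i l = 0 := by
  obtain ⟨s, hs⟩ : ∃ s, i = s + m + l + 1 := ⟨i - m - l - 1, by omega⟩
  have hz : poch ((m : ℝ) - (i : ℝ) + 1 + (l : ℝ)) (2 * i - l) = 0 := by
    rw [show ((m : ℝ) - (i : ℝ) + 1 + (l : ℝ)) = -((s : ℕ) : ℝ) by rw [hs]; push_cast; ring]
    exact poch_neg_nat_zero s _ (by omega)
  rw [Gterm, hz]
  ring

lemma Gterm_zero3 {n m k i l : ℕ} (a1 a2 : ℝ) (h : k + 1 < l) :
    Gterm n m k a1 a2 i l = 0 := by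
  have hz : poch (-(k : ℝ) - 1) l = 0 := by
    rw [show (-(k : ℝ) - 1) = -(((k + 1 : ℕ)) : ℝ) by push_cast; ring]
    exact poch_neg_nat_zero (k + 1) l (by omega)
  rw [Gterm, hz]
  ring

lemma Gterm_zero4 {n m k i l : ℕ} (a1 a2 : ℝ) (h : i < l) :
    Gterm n m k a1 a2 i l = 0 := by
  have hz : poch (-(i : ℝ)) l = 0 := poch_neg_nat_zero i l h
  rw [Gterm, hz]
  ring

lemma betaC_eq_target (n m k : ℕ) (hk : k ≤ n + m) (a1 a2 : ℝ) (ha1 : a1 ≠ 0)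
    (ha2 : a2 ≠ 0) :
    betaC n m a1 a2 k =
      a1 ^ ((k : ℤ) - (m : ℤ)) * a2 ^ m * poch (1 / 2) k /
        (4 ^ (m + n - k) * ((m + n - k).factorial : ℝ) * poch (1 / 2) n * poch (1 / 2) m) *
      ∑ i ∈ Finset.range (m + n - k + 1),
        a1 ^ i * ((m + n - k).choose i : ℝ) *
          poch (-(m : ℝ) + (k : ℝ) + (i : ℝ) + 1) (2 * (m + n - k - i)) * a2 ^ (-(i : ℤ)) *
        ∑ l ∈ Finset.range (i + 1),
          poch ((k : ℝ) + 2) l * poch (-(k : ℝ) - 1) l * poch (-(i : ℝ)) l /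
              (poch (-(m : ℝ) - (i : ℝ)) l * (l.factorial : ℝ)) *
            poch ((m : ℝ) - (i : ℝ) + 1 + (l : ℝ)) (2 * i - l) * a2 ^ l := by
  -- rewrite RHS as a double sum of Gterm over a filtered product set
  have step1 : (a1 ^ ((k : ℤ) - (m : ℤ)) * a2 ^ m * poch (1 / 2) k /
        (4 ^ (m + n - k) * ((m + n - k).factorial : ℝ) * poch (1 / 2) n * poch (1 / 2) m) *
      ∑ i ∈ Finset.range (m + n - k + 1),
        a1 ^ i * ((m + n - k).choose i : ℝ) *
          poch (-(m : ℝ) + (k : ℝ) + (i : ℝ) + 1) (2 * (m + n - k - i)) * a2 ^ (-(i : ℤ)) *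
        ∑ l ∈ Finset.range (i + 1),
          poch ((k : ℝ) + 2) l * poch (-(k : ℝ) - 1) l * poch (-(i : ℝ)) l /
              (poch (-(m : ℝ) - (i : ℝ)) l * (l.factorial : ℝ)) *
            poch ((m : ℝ) - (i : ℝ) + 1 + (l : ℝ)) (2 * i - l) * a2 ^ l)
      = ∑ i ∈ Finset.range (m + n - k + 1), ∑ l ∈ Finset.range (i + 1),
          Gterm n m k a1 a2 i l := by
    rw [Finset.mul_sum]
    refine Finset.sum_congr rfl fun i _ => ?_
    rw [Finset.mul_sum, Finset.mul_sum]
    refine Finset.sum_congr rfl fun l _ => ?_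
    rw [Gterm]
  rw [step1]
  -- extend inner range to m+n-k+1
  have step2 : ∀ i ∈ Finset.range (m + n - k + 1),
      ∑ l ∈ Finset.range (i + 1), Gterm n m k a1 a2 i l
      = ∑ l ∈ Finset.range (m + n - k + 1), Gterm n m k a1 a2 i l := by
    intro i hi
    have hi' := Finset.mem_range.mp hi
    refine Finset.sum_subset (Finset.range_subset_range.mpr (by omega)) ?_
    intro l hl hln
    have h1 := Finset.mem_range.mp hl
    have h2 : ¬ (l < i + 1) := fun hc => hln (Finset.mem_range.mpr hc)
    exact Gterm_zero4 a1 a2 (by omega)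
  rw [Finset.sum_congr rfl step2, ← Finset.sum_product']
  -- filter the G-sum
  have step3 : ∑ x ∈ (Finset.range (m + n - k + 1) ×ˢ Finset.range (m + n - k + 1)).filter
        (fun x => m ≤ k + x.1 ∧ x.1 ≤ m + x.2 ∧ x.2 ≤ k + 1 ∧ x.2 ≤ x.1),
        Gterm n m k a1 a2 x.1 x.2
      = ∑ x ∈ Finset.range (m + n - k + 1) ×ˢ Finset.range (m + n - k + 1),
        Gterm n m k a1 a2 x.1 x.2 := by
    refine Finset.sum_filter_of_ne ?_
    intro x hx hne
    by_contra hcond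
    apply hne
    simp only [not_and_or, not_le] at hcond
    rcases hcond with h | h | h | h
    · exact Gterm_zero1 a1 a2 (by omega)
    · exact Gterm_zero2 a1 a2 (by omega)
    · exact Gterm_zero3 a1 a2 (by omega)
    · exact Gterm_zero4 a1 a2 (by omega)
  rw [← step3]
  -- LHS : betaC as filtered sum of Tterm
  have step4 : betaC n m a1 a2 k
      = ∑ y ∈ (Finset.range (n + 1) ×ˢ Finset.range (m + 1)).filter
          (fun y => k ≤ y.1 + y.2 ∧ y.1 + y.2 ≤ 2 * k + 1),
          Tterm n m k a1 a2 y.1 y.2 := by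
    rw [betaC]
    rw [← Finset.sum_product']
    refine (Finset.sum_filter_of_ne ?_).symm
    intro y hy hne
    by_contra hcond
    apply hne
    exact mul_eq_zero_of_right _ (dd_eq_zero (by omega))
  rw [step4]
  -- the bijection
  refine Finset.sum_nbij' (fun y => (y.1 + m - k, y.1 + y.2 - k))
    (fun x => (k + x.1 - m, m + x.2 - x.1)) ?_ ?_ ?_ ?_ ?_
  · rintro ⟨p, q⟩ hy
    simp only [Finset.mem_filter, Finset.mem_product, Finset.mem_range] at hy ⊢
    omega
  · rintro ⟨i, l⟩ hx
    simp only [Finset.mem_filter, Finset.mem_product, Finset.mem_range] at hx ⊢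
    omega
  · rintro ⟨p, q⟩ hy
    simp only [Finset.mem_filter, Finset.mem_product, Finset.mem_range] at hy
    simp only [Prod.mk.injEq]
    constructor <;> omega
  · rintro ⟨i, l⟩ hx
    simp only [Finset.mem_filter, Finset.mem_product, Finset.mem_range] at hx
    simp only [Prod.mk.injEq]
    constructor <;> omega
  · rintro ⟨p, q⟩ hy
    simp only [Finset.mem_filter, Finset.mem_product, Finset.mem_range] at hy
    exact (Gterm_eq_Tterm n m k p q (p + m - k) (p + q - k) a1 a2 ha1 ha2
      (by omega) (by omega) (by omega) (by omega) (by omega) hk).symm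

/-- Hypergeometric-type single sum formula for the linearization coefficients
`β_k^{(n,m)}(a₁,a₂)` of `q_n(a₁u) q_m(a₂u) = ∑_{k=0}^{n+m} β_k^{(n,m)}(a₁,a₂) q_k(u)`:
the inner sum over `ℓ` is the regularized terminating series
`(m−i+1)_{2i} ⬝ ₃F₂(k+2, −k−1, −i; −m−i, m−i+1; a₂)`. -/
theorem linearization_hypergeometric_formula (n m k : ℕ) (hk : k ≤ n + m)
    (a1 a2 : ℝ) (ha1 : a1 ≠ 0) (ha2 : a2 ≠ 0) (β : ℕ → ℝ)
    (hβ : ∀ u : ℝ, besselQ n (a1 * u) * besselQ m (a2 * u) =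
      ∑ i ∈ Finset.range (n + m + 1), β i * besselQ i u) :
    β k =
      a1 ^ ((k : ℤ) - (m : ℤ)) * a2 ^ m * poch (1 / 2) k /
        (4 ^ (m + n - k) * ((m + n - k).factorial : ℝ) * poch (1 / 2) n * poch (1 / 2) m) *
      ∑ i ∈ Finset.range (m + n - k + 1),
        a1 ^ i * ((m + n - k).choose i : ℝ) *
          poch (-(m : ℝ) + (k : ℝ) + (i : ℝ) + 1) (2 * (m + n - k - i)) * a2 ^ (-(i : ℤ)) *
        ∑ l ∈ Finset.range (i + 1),
          poch ((k : ℝ) + 2) l * poch (-(k : ℝ) - 1) l * poch (-(i : ℝ)) l /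
              (poch (-(m : ℝ) - (i : ℝ)) l * (l.factorial : ℝ)) *
            poch ((m : ℝ) - (i : ℝ) + 1 + (l : ℝ)) (2 * i - l) * a2 ^ l := by
  have hzero : ∀ u : ℝ, ∑ i ∈ Finset.range (n + m + 1),
      (β i - betaC n m a1 a2 i) * besselQ i u = 0 := by
    intro u
    calc ∑ i ∈ Finset.range (n + m + 1), (β i - betaC n m a1 a2 i) * besselQ i u
        = ∑ i ∈ Finset.range (n + m + 1),
            (β i * besselQ i u - betaC n m a1 a2 i * besselQ i u) :=
          Finset.sum_congr rfl fun i _ => sub_mul _ _ _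
      _ = (∑ i ∈ Finset.range (n + m + 1), β i * besselQ i u)
            - ∑ i ∈ Finset.range (n + m + 1), betaC n m a1 a2 i * besselQ i u :=
          Finset.sum_sub_distrib _ _
      _ = 0 := by rw [← hβ u, ← product_expand n m a1 a2 u, sub_self]
  have hkk := indep (n + m + 1) (fun i => β i - betaC n m a1 a2 i) hzero k (by omega)
  have hb : β k = betaC n m a1 a2 k := by
    have : β k - betaC n m a1 a2 k = 0 := hkk
    linarith
  rw [hb, betaC_eq_target n m k hk a1 a2 ha1 ha2]
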